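/- Let R be a commutative ring and let λ, μ ∈ R be units. Then for all integers a ≥ 0 and n ≥ 0 one has W_μ^λ(a, n+1) = (λ^a·μ + λ^{−a}·μ⁻¹)·W_μ^λ(a, n) + W_μ^λ(a−1, n), where by convention W_μ^λ(−1, n) = 0. -/

import Mathlib

open Finset

noncomputable section

/-- `inv(f⁻¹(s), f⁻¹(t))` : the number of pairs `(i, j)` with `i < j`,
`i ∈ f⁻¹(s)` and `j ∈ f⁻¹(t)`. -/
def invP {n : ℕ} (f : Fin n → Fin 3) (s t : Fin 3) : ℕ :=
  ((Finset.univ : Finset (Fin n × Fin n)).filter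
    (fun p => p.1 < p.2 ∧ f p.1 = s ∧ f p.2 = t)).card

/-- The cardinality of `f⁻¹(s)`. -/
def partSize {n : ℕ} (f : Fin n → Fin 3) (s : Fin 3) : ℕ :=
  (Finset.univ.filter (fun i => f i = s)).card

/-- `W_μ^λ(a, n)`: the sum over ordered partitions `{1,…,n} = E₀ ⊔ E ⊔ E₁` (encoded as
functions `f : Fin n → Fin 3`, with `E₀ = f⁻¹(0)`, `E = f⁻¹(1)`, `E₁ = f⁻¹(2)`) with
`|E| = a`, of `λ^(inv(E₀,E) - inv(E₁,E)) · μ^(|E₀| - |E₁|)`.  It vanishes if `a < 0`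
or `a > n`. -/
def W {R : Type*} [CommRing R] (lam mu : Rˣ) (a : ℤ) (n : ℕ) : R :=
  ∑ f ∈ (Finset.univ : Finset (Fin n → Fin 3)).filter (fun f => (partSize f 1 : ℤ) = a),
    ((lam ^ ((invP f 0 1 : ℤ) - (invP f 2 1 : ℤ)) *
      mu ^ ((partSize f 0 : ℤ) - (partSize f 2 : ℤ)) : Rˣ) : R)

lemma partSize_cons {n : ℕ} (c : Fin 3) (g : Fin n → Fin 3) (s : Fin 3) :
    partSize (Fin.cons c g) s = (if c = s then 1 else 0) + partSize g s := by
  unfold partSize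
  rw [Finset.card_filter, Finset.card_filter, Fin.sum_univ_succ]
  simp

lemma invP_cons {n : ℕ} (c : Fin 3) (g : Fin n → Fin 3) (s t : Fin 3) :
    invP (Fin.cons c g) s t = (if c = s then partSize g t else 0) + invP g s t := by
  unfold invP partSize
  rw [Finset.card_filter, Finset.card_filter, Finset.card_filter,
    ← Finset.univ_product_univ, Finset.sum_product,
    ← Finset.univ_product_univ, Finset.sum_product,
    Fin.sum_univ_succ]
  simp only [Fin.sum_univ_succ, Fin.cons_zero, Fin.cons_succ, Fin.not_lt_zero,
    Fin.succ_pos, Fin.succ_lt_succ_iff, false_and, if_false, true_and, zero_add, add_zero]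
  by_cases h : c = s <;> simp [h]

lemma consEquiv_pair {n : ℕ} (c : Fin 3) (g : Fin n → Fin 3) :
    (Fin.consEquiv (fun _ : Fin (n + 1) => Fin 3)) (c, g) = Fin.cons c g := rfl


section
variable {R : Type*} [CommRing R] (lam mu : Rˣ) (a : ℤ) (n : ℕ)

lemma sum_c0 : (∑ g : Fin n → Fin 3,
    if ((partSize (Fin.cons 0 g) 1 : ℤ) = a) then
      ((lam ^ ((invP (Fin.cons 0 g) 0 1 : ℤ) - (invP (Fin.cons 0 g) 2 1 : ℤ)) *
        mu ^ ((partSize (Fin.cons 0 g) 0 : ℤ) - (partSize (Fin.cons 0 g) 2 : ℤ)) : Rˣ) : R)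
    else 0) = ((lam ^ a * mu : Rˣ) : R) * W lam mu a n := by
  rw [W, Finset.sum_filter, Finset.mul_sum]
  refine Finset.sum_congr rfl fun g _ => ?_
  simp only [invP_cons, partSize_cons, eq_true (rfl : (0 : Fin 3) = 0),
    eq_false (by decide : ¬ ((0 : Fin 3) = 1)), eq_false (by decide : ¬ ((0 : Fin 3) = 2)),
    if_true, if_false, zero_add, add_zero, Nat.cast_add, Nat.cast_one]
  split_ifs with h
  · rw [← Units.val_mul]
    congr 1
    rw [h, show a + (invP g 0 1 : ℤ) - invP g 2 1
          = a + ((invP g 0 1 : ℤ) - invP g 2 1) from by ring, zpow_add,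
      show (1 : ℤ) + (partSize g 0 : ℤ) - partSize g 2
          = 1 + ((partSize g 0 : ℤ) - partSize g 2) from by ring,
      zpow_add, zpow_one, mul_mul_mul_comm]
  · rw [mul_zero]

lemma sum_c2 : (∑ g : Fin n → Fin 3,
    if ((partSize (Fin.cons 2 g) 1 : ℤ) = a) then
      ((lam ^ ((invP (Fin.cons 2 g) 0 1 : ℤ) - (invP (Fin.cons 2 g) 2 1 : ℤ)) *
        mu ^ ((partSize (Fin.cons 2 g) 0 : ℤ) - (partSize (Fin.cons 2 g) 2 : ℤ)) : Rˣ) : R)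
    else 0) = ((lam ^ (-a) * mu⁻¹ : Rˣ) : R) * W lam mu a n := by
  rw [W, Finset.sum_filter, Finset.mul_sum]
  refine Finset.sum_congr rfl fun g _ => ?_
  simp only [invP_cons, partSize_cons, eq_true (rfl : (2 : Fin 3) = 2),
    eq_false (by decide : ¬ ((2 : Fin 3) = 1)), eq_false (by decide : ¬ ((2 : Fin 3) = 0)),
    if_true, if_false, zero_add, add_zero, Nat.cast_add, Nat.cast_one]
  split_ifs with h
  · rw [← Units.val_mul]
    congr 1
    rw [h, show (invP g 0 1 : ℤ) - (a + invP g 2 1)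
          = -a + ((invP g 0 1 : ℤ) - invP g 2 1) from by ring, zpow_add,
      show (partSize g 0 : ℤ) - (1 + partSize g 2)
          = -1 + ((partSize g 0 : ℤ) - partSize g 2) from by ring,
      zpow_add, zpow_neg_one, mul_mul_mul_comm]
  · rw [mul_zero]

lemma sum_c1 : (∑ g : Fin n → Fin 3,
    if ((partSize (Fin.cons 1 g) 1 : ℤ) = a) then
      ((lam ^ ((invP (Fin.cons 1 g) 0 1 : ℤ) - (invP (Fin.cons 1 g) 2 1 : ℤ)) *
        mu ^ ((partSize (Fin.cons 1 g) 0 : ℤ) - (partSize (Fin.cons 1 g) 2 : ℤ)) : Rˣ) : R)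
    else 0) = W lam mu (a - 1) n := by
  rw [W, Finset.sum_filter]
  refine Finset.sum_congr rfl fun g _ => ?_
  simp only [invP_cons, partSize_cons, eq_true (rfl : (1 : Fin 3) = 1),
    eq_false (by decide : ¬ ((1 : Fin 3) = 0)), eq_false (by decide : ¬ ((1 : Fin 3) = 2)),
    if_true, if_false, zero_add, add_zero, Nat.cast_add, Nat.cast_one]
  rw [if_congr (show (1 : ℤ) + (partSize g 1 : ℤ) = a ↔ (partSize g 1 : ℤ) = a - 1 from by omega)
    rfl rfl]

end

theorem stmt1 {R : Type*} [CommRing R] (lam mu : Rˣ) (a : ℤ) (ha : 0 ≤ a) (n : ℕ) :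
    W lam mu a (n + 1) =
      (((lam ^ a * mu : Rˣ) : R) + ((lam ^ (-a) * mu⁻¹ : Rˣ) : R)) * W lam mu a n
        + W lam mu (a - 1) n := by
  classical
  rw [W, Finset.sum_filter,
    ← Equiv.sum_comp (Fin.consEquiv (fun _ : Fin (n + 1) => Fin 3)), Fintype.sum_prod_type,
    Fin.sum_univ_three]
  simp only [consEquiv_pair]
  erw [sum_c0, sum_c1, sum_c2]
  ring
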